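/- Let G be a temporal graph, k ≥ 1 an integer, and ts a timestamp. There exists a window [a,b] such that C_[a,b] is nonempty and the tightest time interval TTI(C_[a,b]) has start time ts if and only if some temporal edge of G has a minimal core window whose start time is ts. -/

import Mathlib

variable {V : Type*} [Fintype V]

/-- A vertex set `S` is `k`-dense in `G` if every vertex of `S` has
at least `k` neighbors of `G` lying in `S`. -/
def KDense (G : SimpleGraph V) (k : ℕ) (S : Set V) : Prop :=
  ∀ v ∈ S, k ≤ (S ∩ G.neighborSet v).ncard

/-- The `k`-core of `G`: the union of all `k`-dense vertex sets. -/
def kCore (G : SimpleGraph V) (k : ℕ) : Set V :=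
  ⋃₀ {S | KDense G k S}

/-- A temporal graph on a vertex set `V`: a finite set of temporal edges
`(u, v, t)` with `u ≠ v` and integer timestamp `t`. -/
structure TemporalGraph (V : Type*) where
  E : Finset (V × V × ℤ)
  ne : ∀ e ∈ E, e.1 ≠ e.2.1

/-- The projected (snapshot) graph of `G` over the time window `[ts, te]`. -/
def TemporalGraph.proj (G : TemporalGraph V) (ts te : ℤ) : SimpleGraph V where
  Adj u v := ∃ t, ts ≤ t ∧ t ≤ te ∧ ((u, v, t) ∈ G.E ∨ (v, u, t) ∈ G.E)
  symm := by
    constructor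
    rintro u v ⟨t, h1, h2, h3⟩
    exact ⟨t, h1, h2, h3.symm⟩
  loopless := by
    constructor
    rintro u ⟨t, h1, h2, h3⟩
    rcases h3 with h | h <;> exact G.ne _ h rfl

/-- The temporal `k`-core of the window `[ts, te]`: all temporal edges with
timestamp in `[ts, te]` whose both endpoints lie in the `k`-core of the
projected graph `G_[ts,te]`. -/
def TemporalGraph.tCore (G : TemporalGraph V) (k : ℕ) (ts te : ℤ) :
    Set (V × V × ℤ) :=
  {e | e ∈ G.E ∧ ts ≤ e.2.2 ∧ e.2.2 ≤ te ∧
    e.1 ∈ kCore (G.proj ts te) k ∧ e.2.1 ∈ kCore (G.proj ts te) k}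

/-- `[t1, t2]` is a minimal core window of the temporal edge `e`:
`e` lies in the temporal `k`-core of `[t1, t2]` but in no temporal `k`-core
of a window properly contained in `[t1, t2]`. -/
def MinCoreWindow (G : TemporalGraph V) (k : ℕ) (e : V × V × ℤ)
    (t1 t2 : ℤ) : Prop :=
  e ∈ G.tCore k t1 t2 ∧
  ∀ ts' te', t1 ≤ ts' → te' ≤ t2 → (ts', te') ≠ (t1, t2) →
    e ∉ G.tCore k ts' te'

/-- `[a, b]` is the tightest time interval of the edge set `C`:
`a` and `b` are the minimum and maximum timestamps of the edges in `C`. -/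
def IsTTI (C : Set (V × V × ℤ)) (a b : ℤ) : Prop :=
  IsLeast {t | ∃ e ∈ C, e.2.2 = t} a ∧ IsGreatest {t | ∃ e ∈ C, e.2.2 = t} b

lemma subset_kCore {G : SimpleGraph V} {k : ℕ} {S : Set V} (h : KDense G k S) :
    S ⊆ kCore G k := fun x hx => ⟨S, h, hx⟩

lemma kCore_kDense (G : SimpleGraph V) (k : ℕ) : KDense G k (kCore G k) := by
  rintro v ⟨S, hS, hvS⟩
  exact le_trans (hS v hvS)
    (Set.ncard_le_ncard (Set.inter_subset_inter_left _ (subset_kCore hS)) (Set.toFinite _))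

lemma kCore_mono {H G : SimpleGraph V} {k : ℕ} (h : H ≤ G) :
    kCore H k ⊆ kCore G k := by
  apply subset_kCore
  intro v hv
  refine le_trans (kCore_kDense H k v hv) (Set.ncard_le_ncard ?_ (Set.toFinite _))
  exact Set.inter_subset_inter_right _ (fun w hw => h hw)

lemma proj_mono (G : TemporalGraph V) {a b a' b' : ℤ} (ha : a ≤ a') (hb : b' ≤ b) :
    G.proj a' b' ≤ G.proj a b := by
  rintro u v ⟨t, h1, h2, h3⟩
  exact ⟨t, ha.trans h1, h2.trans hb, h3⟩

lemma tCore_mono (G : TemporalGraph V) (k : ℕ) {a b a' b' : ℤ} (ha : a ≤ a')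
    (hb : b' ≤ b) : G.tCore k a' b' ⊆ G.tCore k a b := by
  rintro f ⟨hfE, h1, h2, hu, hv⟩
  exact ⟨hfE, ha.trans h1, h2.trans hb, kCore_mono (proj_mono G ha hb) hu,
    kCore_mono (proj_mono G ha hb) hv⟩

lemma tCore_eq_of_between (G : TemporalGraph V) (k : ℕ) {a b tmin tmax : ℤ}
    (ha : a ≤ tmin) (hb : tmax ≤ b)
    (hE : ∀ f ∈ G.tCore k a b, tmin ≤ f.2.2 ∧ f.2.2 ≤ tmax) :
    G.tCore k a b = G.tCore k tmin tmax := by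
  have hcore : kCore (G.proj a b) k ⊆ kCore (G.proj tmin tmax) k := by
    apply subset_kCore
    intro v hv
    refine le_trans (kCore_kDense _ k v hv) (Set.ncard_le_ncard ?_ (Set.toFinite _))
    rintro w ⟨hwS, t, h1, h2, h3⟩
    refine ⟨hwS, ?_⟩
    rcases h3 with h | h
    · have hf := hE (v, w, t) ⟨h, h1, h2, hv, hwS⟩
      exact ⟨t, hf.1, hf.2, Or.inl h⟩
    · have hf := hE (w, v, t) ⟨h, h1, h2, hwS, hv⟩
      exact ⟨t, hf.1, hf.2, Or.inr h⟩
  ext f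
  constructor
  · rintro ⟨hfE, h1, h2, hu, hv⟩
    have hff := hE f ⟨hfE, h1, h2, hu, hv⟩
    exact ⟨hfE, hff.1, hff.2, hcore hu, hcore hv⟩
  · exact fun h => tCore_mono G k ha hb h

theorem valid_start_time_iff (G : TemporalGraph V) (k : ℕ) (hk : 1 ≤ k)
    (ts : ℤ) :
    (∃ a b te', (G.tCore k a b).Nonempty ∧ IsTTI (G.tCore k a b) ts te') ↔
    (∃ (e : V × V × ℤ) (t2 : ℤ), MinCoreWindow G k e ts t2) := by
  classical
  constructor
  · rintro ⟨a, b, te', hne, hL, hG⟩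
    obtain ⟨e, heC, het⟩ := hL.1
    have hE : ∀ f ∈ G.tCore k a b, ts ≤ f.2.2 ∧ f.2.2 ≤ te' :=
      fun f hf => ⟨hL.2 ⟨f, hf, rfl⟩, hG.2 ⟨f, hf, rfl⟩⟩
    have ha : a ≤ ts := het ▸ heC.2.1
    obtain ⟨g, hgC, hgt⟩ := hG.1
    have hb : te' ≤ b := hgt ▸ hgC.2.2.1
    have hkey := tCore_eq_of_between G k ha hb hE
    have heC' : e ∈ G.tCore k ts te' := hkey ▸ heC
    obtain ⟨t2, ht2, hmin⟩ := Int.exists_least_of_bdd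
      (P := fun b' => e ∈ G.tCore k ts b')
      ⟨ts, fun z hz => het ▸ hz.2.2.1⟩ ⟨te', heC'⟩
    refine ⟨e, t2, ht2, fun ts' te'' h1 h2 hne' hmem => ?_⟩
    have hts' : ts' = ts := le_antisymm (het ▸ hmem.2.1) h1
    subst hts'
    exact hne' (Prod.ext rfl (le_antisymm h2 (hmin te'' hmem)))
  · rintro ⟨e, t2, heC, hminw⟩
    obtain ⟨tmin, ⟨f, hfC, hft⟩, hlb⟩ := Int.exists_least_of_bdd
      (P := fun t => ∃ f ∈ G.tCore k ts t2, f.2.2 = t)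
      ⟨ts, fun z ⟨g, hg, hgz⟩ => hgz ▸ hg.2.1⟩ ⟨e.2.2, e, heC, rfl⟩
    obtain ⟨tmax, ⟨f', hf'C, hf't⟩, hub⟩ := Int.exists_greatest_of_bdd
      (P := fun t => ∃ f ∈ G.tCore k ts t2, f.2.2 = t)
      ⟨t2, fun z ⟨g, hg, hgz⟩ => hgz ▸ hg.2.2.1⟩ ⟨e.2.2, e, heC, rfl⟩
    have ha : ts ≤ tmin := hft ▸ hfC.2.1
    have hb : tmax ≤ t2 := hf't ▸ hf'C.2.2.1
    have hE : ∀ g ∈ G.tCore k ts t2, tmin ≤ g.2.2 ∧ g.2.2 ≤ tmax :=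
      fun g hg => ⟨hlb _ ⟨g, hg, rfl⟩, hub _ ⟨g, hg, rfl⟩⟩
    have hkey := tCore_eq_of_between G k ha hb hE
    have heq : (tmin, tmax) = (ts, t2) := by
      by_contra hne'
      exact hminw tmin tmax ha hb hne' (hkey ▸ heC)
    have h1 : tmin = ts := congrArg Prod.fst heq
    have h2 : tmax = t2 := congrArg Prod.snd heq
    subst h1; subst h2
    exact ⟨tmin, tmax, tmax, ⟨e, heC⟩,
      ⟨⟨f, hfC, hft⟩, fun z hz => hlb z hz⟩,
      ⟨⟨f', hf'C, hf't⟩, fun z hz => hub z hz⟩⟩
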